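/- Let w ∈ ℍ and h ∈ ℝ. Then (i) the derivative of g_{w,ε,θ} at 0 equals g'_{w,ε,θ}(0) = 1 + (ε²/16)(e^{2iθ}/w² + e^{−2iθ}/w̄²); and (ii) with the principal-branch power z^h (well defined for ε small enough since g'_{w,ε,θ}(0) → 1 uniformly in θ as ε → 0), lim_{ε→0⁺} (8/(π ε²)) ∫₀^{2π} e^{−2iθ} (g'_{w,ε,θ}(0))^{h} dθ = h/w². (This is the computation giving the one-point function Q₂^{(1,0)}(w) = h/w² for a conformal restriction measure with restriction exponent h.) -/

import Mathlib

open Complex Real Filter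

lemma cpow_taylor (h : ℝ) {z : ℂ} (hz : ‖z‖ ≤ 1 / (2 * (|h| + 1))) :
    ‖(1 + z) ^ (h : ℂ) - 1 - (h : ℂ) * z‖ ≤ 6 * (|h| + 1) ^ 2 * ‖z‖ ^ 2 := by
  obtain ⟨H, hHdef⟩ : ∃ H : ℝ, H = |h| + 1 := ⟨_, rfl⟩
  rw [← hHdef] at hz ⊢
  have hH1 : (1:ℝ) ≤ H := by rw [hHdef]; linarith [abs_nonneg h]
  have hhH : |h| ≤ H := by rw [hHdef]; linarith
  have hz2 : ‖z‖ ≤ 1/2 := by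
    refine hz.trans ?_
    rw [div_le_div_iff₀ (by positivity) (by norm_num)]
    linarith
  have hlt : ‖z‖ < 1 := lt_of_le_of_lt hz2 (by norm_num)
  have h1z : (1:ℂ) + z ≠ 0 := by
    intro e
    have hz1 : z = -1 := by linear_combination e
    rw [hz1] at hz2; norm_num at hz2
  have hinv : (1 - ‖z‖)⁻¹ ≤ 2 := by
    rw [inv_le_comm₀ (by linarith) (by norm_num)]; linarith
  have hE : ‖Complex.log (1+z) - z‖ ≤ ‖z‖^2 := by
    have h1 := Complex.norm_log_one_add_sub_self_le hlt
    have h2 : ‖z‖^2 * (1 - ‖z‖)⁻¹ / 2 ≤ ‖z‖^2 := by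
      nlinarith [sq_nonneg ‖z‖, norm_nonneg z]
    linarith
  have hlog : ‖Complex.log (1+z)‖ ≤ 2 * ‖z‖ := by
    have h1 : ‖Complex.log (1+z)‖ ≤ ‖Complex.log (1+z) - z‖ + ‖z‖ := by
      simpa using norm_add_le (Complex.log (1+z) - z) z
    nlinarith [norm_nonneg z]
  set u := (h:ℂ) * Complex.log (1+z) with hu_def
  have hnormh : ‖(h:ℂ)‖ = |h| := by simp
  have hu : ‖u‖ ≤ 2 * H * ‖z‖ := by
    rw [hu_def, norm_mul, hnormh]
    nlinarith [abs_nonneg h, norm_nonneg (Complex.log (1+z)), norm_nonneg z]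
  have hu1 : ‖u‖ ≤ 1 := by
    have h2H : (0:ℝ) < 2 * H := by linarith
    have h1 : 2 * H * ‖z‖ ≤ 2 * H * (1 / (2 * H)) :=
      mul_le_mul_of_nonneg_left hz (le_of_lt h2H)
    have h2 : 2 * H * (1 / (2 * H)) = 1 := by field_simp
    linarith
  have hr : ‖Complex.exp u - 1 - u‖ ≤ ‖u‖^2 := by
    simpa using Complex.norm_exp_sub_one_sub_id_le
      (by simpa using hu1)
  have hcpow : (1+z)^(h:ℂ) = Complex.exp u := by
    rw [Complex.cpow_def_of_ne_zero h1z, hu_def]; ring_nf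
  have key : (1+z)^(h:ℂ) - 1 - (h:ℂ)*z
      = (Complex.exp u - 1 - u) + (h:ℂ) * (Complex.log (1+z) - z) := by
    rw [hcpow, hu_def]; ring
  rw [key]
  calc ‖(Complex.exp u - 1 - u) + (h:ℂ) * (Complex.log (1+z) - z)‖
      ≤ ‖Complex.exp u - 1 - u‖ + ‖(h:ℂ)‖ * ‖Complex.log (1+z) - z‖ := by
        refine (norm_add_le _ _).trans ?_; rw [norm_mul]
    _ ≤ ‖u‖^2 + |h| * ‖z‖^2 := by
        rw [hnormh]; gcongr
    _ ≤ 6 * H^2 * ‖z‖^2 := by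
        have hA : ‖u‖^2 ≤ 4*H^2*‖z‖^2 := by
          nlinarith [mul_le_mul hu hu (norm_nonneg u) (by positivity : (0:ℝ) ≤ 2*H*‖z‖)]
        have hhH2 : |h| ≤ H^2 := by nlinarith
        have hB : |h| * ‖z‖^2 ≤ H^2 * ‖z‖^2 :=
          mul_le_mul_of_nonneg_right hhH2 (sq_nonneg ‖z‖)
        nlinarith [mul_nonneg (sq_nonneg H) (sq_nonneg ‖z‖)]

lemma hasDerivAt_inv_shift (v a : ℂ) (hv : v ≠ 0) :
    HasDerivAt (fun z : ℂ => a / (v - z)) (a / v ^ 2) 0 := by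
  have h := (hasDerivAt_const (0:ℂ) a).div
    ((hasDerivAt_const (0:ℂ) v).sub (hasDerivAt_id 0)) (by simpa using hv)
  exact h.congr_deriv (by simp)

lemma deriv_g_eq (w a b : ℂ) (hw0 : w ≠ 0) (hwc : starRingEnd ℂ w ≠ 0) :
    deriv (fun z : ℂ => z + a / (w - z) + b / (starRingEnd ℂ w - z)
      - a / w - b / starRingEnd ℂ w) 0
    = 1 + a / w ^ 2 + b / (starRingEnd ℂ w) ^ 2 := by
  have h : HasDerivAt (fun z : ℂ => z + a / (w - z) + b / (starRingEnd ℂ w - z)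
      - a / w - b / starRingEnd ℂ w) (1 + a / w ^ 2 + b / (starRingEnd ℂ w) ^ 2) 0 :=
    (((hasDerivAt_id (0:ℂ)).add (hasDerivAt_inv_shift w a hw0)).add
      (hasDerivAt_inv_shift (starRingEnd ℂ w) b hwc)).sub_const _ |>.sub_const _
  exact h.deriv

lemma integral_piece (w : ℂ) (hw0 : w ≠ 0) (hwc : starRingEnd ℂ w ≠ 0) (h ε : ℝ) :
    ∫ θ in (0:ℝ)..(2*π), Complex.exp (-(2*(θ:ℂ))*Complex.I) *
      (1 + (h:ℂ) * (((ε:ℂ)^2/16) * (Complex.exp (2*(θ:ℂ)*Complex.I)/w^2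
        + Complex.exp (-(2*(θ:ℂ))*Complex.I)/(starRingEnd ℂ w)^2)))
    = (π:ℂ) * (ε:ℂ)^2 * (h:ℂ) / (8 * w^2) := by
  have hw2 : w^2 ≠ 0 := pow_ne_zero _ hw0
  have hwc2 : (starRingEnd ℂ w)^2 ≠ 0 := pow_ne_zero _ hwc
  have e1 : ∀ θ : ℝ, Complex.exp (-(2*(θ:ℂ))*Complex.I) *
      (1 + (h:ℂ) * (((ε:ℂ)^2/16) * (Complex.exp (2*(θ:ℂ)*Complex.I)/w^2
        + Complex.exp (-(2*(θ:ℂ))*Complex.I)/(starRingEnd ℂ w)^2)))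
      = (h:ℂ)*(ε:ℂ)^2/(16*w^2) + Complex.exp ((-2*Complex.I)*(θ:ℂ))
        + ((h:ℂ)*(ε:ℂ)^2/(16*(starRingEnd ℂ w)^2)) * Complex.exp ((-4*Complex.I)*(θ:ℂ)) := by
    intro θ
    have h2 : Complex.exp (-(2*(θ:ℂ))*Complex.I) * Complex.exp (2*(θ:ℂ)*Complex.I) = 1 := by
      rw [← Complex.exp_add, show -(2*(θ:ℂ))*Complex.I + 2*(θ:ℂ)*Complex.I = 0 by ring,
        Complex.exp_zero]
    have h4 : Complex.exp (-(2*(θ:ℂ))*Complex.I) * Complex.exp (-(2*(θ:ℂ))*Complex.I)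
        = Complex.exp ((-4*Complex.I)*(θ:ℂ)) := by
      rw [← Complex.exp_add]; congr 1; ring
    have h2' : Complex.exp (-(2*(θ:ℂ))*Complex.I) = Complex.exp ((-2*Complex.I)*(θ:ℂ)) := by
      congr 1; ring
    rw [← h2']
    linear_combination ((h:ℂ)*(ε:ℂ)^2/(16*w^2)) * h2
      + ((h:ℂ)*(ε:ℂ)^2/(16*(starRingEnd ℂ w)^2)) * h4
  rw [intervalIntegral.integral_congr (fun θ _ => e1 θ)]
  have i1 : IntervalIntegrable (fun _ : ℝ => (h:ℂ)*(ε:ℂ)^2/(16*w^2)) MeasureTheory.volume 0 (2*π) :=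
    intervalIntegrable_const
  have i2 : IntervalIntegrable (fun θ : ℝ => Complex.exp ((-2*Complex.I)*(θ:ℂ)))
      MeasureTheory.volume 0 (2*π) := by
    apply Continuous.intervalIntegrable; continuity
  have i3 : IntervalIntegrable
      (fun θ : ℝ => ((h:ℂ)*(ε:ℂ)^2/(16*(starRingEnd ℂ w)^2)) * Complex.exp ((-4*Complex.I)*(θ:ℂ)))
      MeasureTheory.volume 0 (2*π) := by
    apply Continuous.intervalIntegrable; continuity
  rw [intervalIntegral.integral_add (i1.add i2) i3, intervalIntegral.integral_add i1 i2,
    intervalIntegral.integral_const, intervalIntegral.integral_const_mul,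
    integral_exp_mul_complex (by simp [Complex.I_ne_zero] : (-2*Complex.I) ≠ 0),
    integral_exp_mul_complex (by simp [Complex.I_ne_zero] : (-4*Complex.I) ≠ 0)]
  have v2 : Complex.exp ((-2*Complex.I) * ((2*π : ℝ):ℂ)) = 1 := by
    rw [show (-2*Complex.I) * ((2*π : ℝ):ℂ) = ((-2:ℤ):ℂ) * (2*(π:ℂ)*Complex.I) by push_cast; ring]
    exact Complex.exp_int_mul_two_pi_mul_I (-2)
  have v4 : Complex.exp ((-4*Complex.I) * ((2*π : ℝ):ℂ)) = 1 := by
    rw [show (-4*Complex.I) * ((2*π : ℝ):ℂ) = ((-4:ℤ):ℂ) * (2*(π:ℂ)*Complex.I) by push_cast; ring]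
    exact Complex.exp_int_mul_two_pi_mul_I (-4)
  rw [v2, v4]
  simp only [Complex.ofReal_zero, mul_zero, Complex.exp_zero, sub_self, zero_div, sub_zero]
  rw [real_smul]
  push_cast
  field_simp
  ring

noncomputable def cfun (w : ℂ) (ε θ : ℝ) : ℂ :=
  ((ε:ℂ)^2/16) * (Complex.exp (2*(θ:ℂ)*Complex.I)/w^2
    + Complex.exp (-(2*(θ:ℂ))*Complex.I)/(starRingEnd ℂ w)^2)

lemma norm_exp_theta (t : ℝ) : ‖Complex.exp ((t:ℂ)*Complex.I)‖ = 1 := by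
  simp [Complex.norm_exp]

lemma norm_exp1 (θ : ℝ) : ‖Complex.exp (2*(θ:ℂ)*Complex.I)‖ = 1 := by
  rw [show 2*(θ:ℂ)*Complex.I = ((2*θ:ℝ):ℂ)*Complex.I by push_cast; ring]
  exact norm_exp_theta _

lemma norm_exp2 (θ : ℝ) : ‖Complex.exp (-(2*(θ:ℂ))*Complex.I)‖ = 1 := by
  rw [show -(2*(θ:ℂ))*Complex.I = ((-(2*θ):ℝ):ℂ)*Complex.I by push_cast; ring]
  exact norm_exp_theta _

lemma cfun_norm_le (w : ℂ) (hw0 : w ≠ 0) (ε θ : ℝ) :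
    ‖cfun w ε θ‖ ≤ ε^2 * (1/(8*‖w‖^2)) := by
  have hwn : 0 < ‖w‖ := norm_pos_iff.mpr hw0
  have hcw : ‖starRingEnd ℂ w‖ = ‖w‖ := RCLike.norm_conj w
  rw [cfun, norm_mul]
  have h1 : ‖((ε:ℂ)^2/16)‖ = ε^2/16 := by
    rw [norm_div, norm_pow]
    simp [abs_of_nonneg, sq_abs]
  have h2 : ‖Complex.exp (2*(θ:ℂ)*Complex.I)/w^2
      + Complex.exp (-(2*(θ:ℂ))*Complex.I)/(starRingEnd ℂ w)^2‖ ≤ 2/‖w‖^2 := by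
    refine (norm_add_le _ _).trans ?_
    rw [norm_div, norm_div, norm_pow, norm_pow, hcw, norm_exp1, norm_exp2,
    ]
    simp only [div_eq_mul_inv]
    linarith [inv_nonneg.mpr (sq_nonneg ‖w‖)]
  rw [h1]
  calc (ε^2/16) * ‖Complex.exp (2*(θ:ℂ)*Complex.I)/w^2
      + Complex.exp (-(2*(θ:ℂ))*Complex.I)/(starRingEnd ℂ w)^2‖
      ≤ (ε^2/16) * (2/‖w‖^2) := mul_le_mul_of_nonneg_left h2 (by positivity)
    _ = ε^2 * (1/(8*‖w‖^2)) := by field_simp; ring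

lemma part2 (w : ℂ) (hw0 : w ≠ 0) (hwc : starRingEnd ℂ w ≠ 0) (h : ℝ) :
    Filter.Tendsto
      (fun ε : ℝ => ((8 / (π * ε ^ 2) : ℝ) : ℂ) *
        ∫ θ in (0 : ℝ)..(2 * π),
          Complex.exp (-(2 * (θ : ℂ)) * Complex.I) * (1 + cfun w ε θ) ^ (h : ℂ))
      (nhdsWithin 0 (Set.Ioi 0)) (nhds ((h : ℂ) / w ^ 2)) := by
  have hwn : 0 < ‖w‖ := norm_pos_iff.mpr hw0
  set M : ℝ := 1/(8*‖w‖^2) with hM_def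
  have hM : 0 < M := by positivity
  set K : ℝ := 6*(|h|+1)^2 with hK_def
  have hK : 0 < K := by positivity
  set δ : ℝ := 1/(2*(|h|+1)) with hδ_def
  have hδ : 0 < δ := by positivity
  have hδhalf : δ ≤ 1/2 := by
    rw [hδ_def, div_le_div_iff₀ (by positivity) (by norm_num)]
    nlinarith [abs_nonneg h]
  -- the eventual bound
  have hbound : ∀ᶠ ε : ℝ in nhdsWithin 0 (Set.Ioi 0),
      ‖((8 / (π * ε ^ 2) : ℝ) : ℂ) *
        (∫ θ in (0 : ℝ)..(2 * π),
          Complex.exp (-(2 * (θ : ℂ)) * Complex.I) * (1 + cfun w ε θ) ^ (h : ℂ))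
        - (h : ℂ) / w ^ 2‖ ≤ (16*K*M^2)*ε^2 := by
    have hev1 : ∀ᶠ ε : ℝ in nhdsWithin 0 (Set.Ioi 0), 0 < ε :=
      eventually_mem_nhdsWithin
    have ht : Tendsto (fun ε : ℝ => ε^2*M) (nhdsWithin 0 (Set.Ioi 0)) (nhds 0) := by
      have hc : Continuous (fun ε : ℝ => ε^2*M) := by fun_prop
      have h0 : Tendsto (fun ε : ℝ => ε^2*M) (nhds 0) (nhds 0) := by
        simpa using hc.tendsto 0
      exact h0.mono_left nhdsWithin_le_nhds
    have hev2 : ∀ᶠ ε : ℝ in nhdsWithin 0 (Set.Ioi 0), ε^2*M < δ :=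
      ht.eventually_lt_const hδ
    filter_upwards [hev1, hev2] with ε hε hεδ
    have hπ : (0:ℝ) < π := Real.pi_pos
    have hcsmall : ∀ θ : ℝ, ‖cfun w ε θ‖ ≤ δ := fun θ =>
      (cfun_norm_le w hw0 ε θ).trans (le_of_lt hεδ)
    have hre : ∀ θ : ℝ, (1 + cfun w ε θ) ∈ Complex.slitPlane := by
      intro θ
      rw [Complex.mem_slitPlane_iff]
      left
      have h1 : |(cfun w ε θ).re| ≤ ‖cfun w ε θ‖ := Complex.abs_re_le_norm _
      have h2 := hcsmall θ
      simp only [Complex.add_re, Complex.one_re]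
      have := abs_le.mp (h1.trans (h2.trans hδhalf))
      linarith [this.1]
    -- continuity / integrability
    have hcontc : Continuous (fun θ : ℝ => cfun w ε θ) := by
      unfold cfun; fun_prop
    have hcontA : Continuous (fun θ : ℝ =>
        Complex.exp (-(2 * (θ : ℂ)) * Complex.I) * (1 + cfun w ε θ) ^ (h : ℂ)) := by
      apply Continuous.mul
      · fun_prop
      · exact (continuous_const.add hcontc).cpow continuous_const hre
    have hcontB : Continuous (fun θ : ℝ =>
        Complex.exp (-(2 * (θ : ℂ)) * Complex.I) * (1 + (h:ℂ) * cfun w ε θ)) := by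
      apply Continuous.mul
      · fun_prop
      · exact continuous_const.add (continuous_const.mul hcontc)
    have hAint := hcontA.intervalIntegrable (μ := MeasureTheory.volume) 0 (2*π)
    have hBint := hcontB.intervalIntegrable (μ := MeasureTheory.volume) 0 (2*π)
    -- split the integral
    have hsplit : (∫ θ in (0:ℝ)..(2*π),
          Complex.exp (-(2 * (θ : ℂ)) * Complex.I) * (1 + cfun w ε θ) ^ (h : ℂ))
        = (∫ θ in (0:ℝ)..(2*π),
            Complex.exp (-(2 * (θ : ℂ)) * Complex.I) * (1 + (h:ℂ) * cfun w ε θ))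
          + ∫ θ in (0:ℝ)..(2*π),
            (Complex.exp (-(2 * (θ : ℂ)) * Complex.I) * (1 + cfun w ε θ) ^ (h : ℂ)
              - Complex.exp (-(2 * (θ : ℂ)) * Complex.I) * (1 + (h:ℂ) * cfun w ε θ)) := by
      rw [intervalIntegral.integral_sub hAint hBint]
      ring
    have hBval : (∫ θ in (0:ℝ)..(2*π),
          Complex.exp (-(2 * (θ : ℂ)) * Complex.I) * (1 + (h:ℂ) * cfun w ε θ))
        = (π:ℂ) * (ε:ℂ)^2 * (h:ℂ) / (8 * w^2) := by
      have := integral_piece w hw0 hwc h ε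
      simpa [cfun] using this
    -- remainder bound
    have hrem : ∀ θ : ℝ, ‖Complex.exp (-(2 * (θ : ℂ)) * Complex.I) * (1 + cfun w ε θ) ^ (h : ℂ)
        - Complex.exp (-(2 * (θ : ℂ)) * Complex.I) * (1 + (h:ℂ) * cfun w ε θ)‖
        ≤ K * (ε^2*M)^2 := by
      intro θ
      rw [← mul_sub, norm_mul, norm_exp2, one_mul]
      have h1 : (1 + cfun w ε θ) ^ (h : ℂ) - (1 + (h:ℂ) * cfun w ε θ)
          = (1 + cfun w ε θ) ^ (h : ℂ) - 1 - (h:ℂ) * cfun w ε θ := by ring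
      rw [h1]
      refine (cpow_taylor h (by simpa [hδ_def] using hcsmall θ)).trans ?_
      rw [← hK_def]
      have h2 : ‖cfun w ε θ‖^2 ≤ (ε^2*M)^2 := by
        apply pow_le_pow_left₀ (norm_nonneg _)
        exact cfun_norm_le w hw0 ε θ
      exact mul_le_mul_of_nonneg_left h2 (le_of_lt hK)
    have hremint : ‖∫ θ in (0:ℝ)..(2*π),
        (Complex.exp (-(2 * (θ : ℂ)) * Complex.I) * (1 + cfun w ε θ) ^ (h : ℂ)
          - Complex.exp (-(2 * (θ : ℂ)) * Complex.I) * (1 + (h:ℂ) * cfun w ε θ))‖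
        ≤ K * (ε^2*M)^2 * |2*π - 0| :=
      intervalIntegral.norm_integral_le_of_norm_le_const (fun θ _ => hrem θ)
    -- main computation
    have hπε : ((π * ε^2 : ℝ)) ≠ 0 := by positivity
    have hkey : ((8 / (π * ε ^ 2) : ℝ) : ℂ) *
        (∫ θ in (0 : ℝ)..(2 * π),
          Complex.exp (-(2 * (θ : ℂ)) * Complex.I) * (1 + cfun w ε θ) ^ (h : ℂ))
        - (h : ℂ) / w ^ 2
        = ((8 / (π * ε ^ 2) : ℝ) : ℂ) *
          ∫ θ in (0:ℝ)..(2*π),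
            (Complex.exp (-(2 * (θ : ℂ)) * Complex.I) * (1 + cfun w ε θ) ^ (h : ℂ)
              - Complex.exp (-(2 * (θ : ℂ)) * Complex.I) * (1 + (h:ℂ) * cfun w ε θ)) := by
      rw [hsplit, hBval, mul_add]
      have hπc : ((π:ℝ):ℂ) ≠ 0 := by exact_mod_cast ne_of_gt hπ
      have hεc : ((ε:ℝ):ℂ) ≠ 0 := by exact_mod_cast ne_of_gt hε
      have hw2 : w^2 ≠ 0 := pow_ne_zero _ hw0
      have hscal : ((8 / (π * ε ^ 2) : ℝ) : ℂ) * ((π:ℂ) * (ε:ℂ)^2 * (h:ℂ) / (8 * w^2))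
          = (h:ℂ)/w^2 := by
        push_cast
        field_simp
      rw [hscal]
      ring
    rw [hkey, norm_mul]
    have hn8 : ‖((8 / (π * ε ^ 2) : ℝ) : ℂ)‖ = 8 / (π * ε^2) := by
      rw [Complex.norm_real]
      exact abs_of_pos (by positivity)
    rw [hn8]
    calc 8 / (π * ε^2) * ‖∫ θ in (0:ℝ)..(2*π),
        (Complex.exp (-(2 * (θ : ℂ)) * Complex.I) * (1 + cfun w ε θ) ^ (h : ℂ)
          - Complex.exp (-(2 * (θ : ℂ)) * Complex.I) * (1 + (h:ℂ) * cfun w ε θ))‖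
        ≤ 8 / (π * ε^2) * (K * (ε^2*M)^2 * |2*π - 0|) := by
          apply mul_le_mul_of_nonneg_left hremint (by positivity)
      _ = (16*K*M^2)*ε^2 := by
          rw [sub_zero, abs_of_pos (by positivity : (0:ℝ) < 2*π)]
          field_simp
          ring
  -- conclude
  rw [tendsto_iff_norm_sub_tendsto_zero]
  refine squeeze_zero_norm' (by filter_upwards [hbound] with ε hε using by simpa using hε) ?_
  have hc : Continuous (fun ε : ℝ => (16*K*M^2)*ε^2) := by fun_prop
  have h0 : Tendsto (fun ε : ℝ => (16*K*M^2)*ε^2) (nhds 0) (nhds 0) := by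
    simpa using hc.tendsto 0
  exact h0.mono_left nhdsWithin_le_nhds

/-- (i) The derivative of `g_{w,ε,θ}` at `0` is `1 + (ε²/16)(e^{2iθ}/w² + e^{-2iθ}/w̄²)`;
(ii) `lim_{ε→0⁺} (8/(πε²)) ∫₀^{2π} e^{-2iθ} (g'_{w,ε,θ}(0))^h dθ = h/w²`. -/
theorem stmt5 (w : ℂ) (hw : 0 < w.im) (h : ℝ)
    (g : ℝ → ℝ → ℂ → ℂ)
    (hg : ∀ ε θ z, g ε θ z = z
        + ((ε : ℂ) ^ 2 / 16) * Complex.exp (2 * (θ : ℂ) * Complex.I) / (w - z)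
        + ((ε : ℂ) ^ 2 / 16) * Complex.exp (-(2 * (θ : ℂ)) * Complex.I) / (starRingEnd ℂ w - z)
        - ((ε : ℂ) ^ 2 / 16) * Complex.exp (2 * (θ : ℂ) * Complex.I) / w
        - ((ε : ℂ) ^ 2 / 16) * Complex.exp (-(2 * (θ : ℂ)) * Complex.I) / starRingEnd ℂ w) :
    (∀ ε θ : ℝ, deriv (g ε θ) 0
        = 1 + ((ε : ℂ) ^ 2 / 16) * (Complex.exp (2 * (θ : ℂ) * Complex.I) / w ^ 2
            + Complex.exp (-(2 * (θ : ℂ)) * Complex.I) / (starRingEnd ℂ w) ^ 2)) ∧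
    Filter.Tendsto
      (fun ε : ℝ => ((8 / (π * ε ^ 2) : ℝ) : ℂ) *
        ∫ θ in (0 : ℝ)..(2 * π),
          Complex.exp (-(2 * (θ : ℂ)) * Complex.I) * (deriv (g ε θ) 0) ^ (h : ℂ))
      (nhdsWithin 0 (Set.Ioi 0)) (nhds ((h : ℂ) / w ^ 2)) := by
  have hw0 : w ≠ 0 := by intro e; rw [e] at hw; simp at hw
  have hwc : starRingEnd ℂ w ≠ 0 := by simpa using hw0
  have hd : ∀ ε θ : ℝ, deriv (g ε θ) 0 = 1 + cfun w ε θ := by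
    intro ε θ
    have hfun : g ε θ = fun z : ℂ => z
        + (((ε:ℂ)^2/16) * Complex.exp (2*(θ:ℂ)*Complex.I)) / (w - z)
        + (((ε:ℂ)^2/16) * Complex.exp (-(2*(θ:ℂ))*Complex.I)) / (starRingEnd ℂ w - z)
        - (((ε:ℂ)^2/16) * Complex.exp (2*(θ:ℂ)*Complex.I)) / w
        - (((ε:ℂ)^2/16) * Complex.exp (-(2*(θ:ℂ))*Complex.I)) / starRingEnd ℂ w := by
      funext z; exact hg ε θ z
    rw [hfun, deriv_g_eq w _ _ hw0 hwc]
    simp only [cfun]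
    ring
  refine ⟨fun ε θ => by rw [hd ε θ]; simp only [cfun], ?_⟩
  refine (part2 w hw0 hwc h).congr fun ε => ?_
  congr 1
  exact intervalIntegral.integral_congr fun θ _ => by rw [hd ε θ]
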